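/- Every non-empty finite simple graph in which every vertex has a neighborhood inducing the disjoint union of at most two cliques is (2ω − 1)-colorable; more precisely, if every non-empty induced subgraph of G has a vertex v with N(v) inducing a disjoint union of at most two cliques, then χ(G) ≤ 2ω(G) − 1 (when G is non-empty). -/
import Mathlib


open SimpleGraph

private lemma key_color {V : Type*} [Fintype V] [DecidableEq V] (G : SimpleGraph V)
    [DecidableRel G.Adj] (n : ℕ) (hn : 0 < n)
    (hdeg : ∀ s : Finset V, s.Nonempty → ∃ v ∈ s, (s.filter (G.Adj v)).card < n) :
    ∀ s : Finset V, ∃ c : V → Fin n, ∀ v ∈ s, ∀ w ∈ s, G.Adj v w → c v ≠ c w := by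
  intro s
  induction s using Finset.strongInduction with
  | _ s ih =>
    rcases s.eq_empty_or_nonempty with rfl | hne
    · exact ⟨fun _ => ⟨0, hn⟩, by simp⟩
    obtain ⟨v, hv, hcard⟩ := hdeg s hne
    obtain ⟨c, hc⟩ := ih (s.erase v) (Finset.erase_ssubset hv)
    -- colors used on neighbors of v in s
    set used : Finset (Fin n) := (s.filter (G.Adj v)).image c with hused
    have husedcard : used.card < n := lt_of_le_of_lt (Finset.card_image_le) hcard
    have : ∃ k : Fin n, k ∉ used := by
      by_contra hco
      push_neg at hco
      have : (Finset.univ : Finset (Fin n)).card ≤ used.card :=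
        Finset.card_le_card (fun k _ => hco k)
      simp at this
      omega
    obtain ⟨k, hk⟩ := this
    refine ⟨Function.update c v k, ?_⟩
    intro a ha b hb hab
    have hane : a ≠ b := G.ne_of_adj hab
    by_cases hav : a = v
    · subst hav
      rw [Function.update_self, Function.update_of_ne (Ne.symm hane)]
      intro hEq
      exact hk (hEq ▸ Finset.mem_image_of_mem c (Finset.mem_filter.2 ⟨hb, hab⟩))
    · by_cases hbv : b = v
      · subst hbv
        rw [Function.update_self, Function.update_of_ne hav]
        intro hEq
        exact hk (hEq ▸ Finset.mem_image_of_mem c (Finset.mem_filter.2 ⟨ha, hab.symm⟩))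
      · rw [Function.update_of_ne hav, Function.update_of_ne hbv]
        exact hc a (Finset.mem_erase.2 ⟨hav, ha⟩) b (Finset.mem_erase.2 ⟨hbv, hb⟩) hab

/-- if every non-empty induced subgraph of `G` (given by a non-empty
vertex subset `X`) contains a vertex `v` whose neighborhood inside `X` is a disjoint
union of at most two cliques (two disjoint cliques with no edges between them),
then `χ(G) ≤ 2·ω(G) − 1`. -/
theorem stmt_12 {V : Type*} [Fintype V] [Nonempty V] (G : SimpleGraph V)
    (h : ∀ X : Set V, X.Nonempty → ∃ v ∈ X,
      ∃ A B : Set V, A ∪ B = {w ∈ X | G.Adj v w} ∧ Disjoint A B ∧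
        G.IsClique A ∧ G.IsClique B ∧ ∀ a ∈ A, ∀ b ∈ B, ¬ G.Adj a b) :
    G.chromaticNumber ≤ (2 * G.cliqueNum - 1 : ℕ) := by
  classical
  set n := 2 * G.cliqueNum - 1 with hn
  have hω : 1 ≤ G.cliqueNum := by
    obtain ⟨v⟩ := (inferInstance : Nonempty V)
    have : G.IsClique ({v} : Finset V) := by simp [SimpleGraph.isClique_iff]
    have := SimpleGraph.IsClique.card_le_cliqueNum (tc := this)
    simpa using this
  have hnpos : 0 < n := by omega
  have hdeg : ∀ s : Finset V, s.Nonempty → ∃ v ∈ s, (s.filter (G.Adj v)).card < n := by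
    intro s hne
    obtain ⟨v, hv, A, B, hAB, hdisj, hA, hB, _⟩ := h ↑s ⟨hne.choose, by exact_mod_cast hne.choose_spec⟩
    refine ⟨v, by exact_mod_cast hv, ?_⟩
    have hfin : ((s.filter (G.Adj v) : Finset V) : Set V) = A ∪ B := by
      rw [hAB]; ext w; simp [and_comm]
    have hcard : (s.filter (G.Adj v)).card = (A ∪ B).ncard := by
      rw [← hfin, Set.ncard_coe_finset]
    have hAsub : A ⊆ {w | G.Adj v w} := fun w hw => by
      have : w ∈ A ∪ B := Or.inl hw
      rw [hAB] at this; exact this.2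
    have hBsub : B ⊆ {w | G.Adj v w} := fun w hw => by
      have : w ∈ A ∪ B := Or.inr hw
      rw [hAB] at this; exact this.2
    have hAfin : A.Finite := Set.toFinite A
    have hBfin : B.Finite := Set.toFinite B
    have hclique : ∀ (C : Set V), C ⊆ {w | G.Adj v w} → G.IsClique C →
        C.ncard + 1 ≤ G.cliqueNum := by
      intro C hCsub hC
      have hvC : v ∉ C := fun hvc => G.irrefl (hCsub hvc)
      have hins : G.IsClique (insert v C) := by
        intro a ha b hb hab
        rcases ha with rfl | ha
        · rcases hb with rfl | hb
          · exact absurd rfl hab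
          · exact hCsub hb
        · rcases hb with rfl | hb
          · exact (hCsub ha).symm
          · exact hC ha hb hab
      have hfin : (insert v C).Finite := Set.toFinite _
      have : G.IsClique (hfin.toFinset : Finset V) := by
        rwa [Set.Finite.coe_toFinset]
      have hle := SimpleGraph.IsClique.card_le_cliqueNum (tc := this)
      rw [← Set.ncard_eq_toFinset_card _ hfin] at hle
      rwa [Set.ncard_insert_of_notMem hvC] at hle
    have h1 := hclique A hAsub hA
    have h2 := hclique B hBsub hB
    have := Set.ncard_union_le A B
    omega
  obtain ⟨c, hc⟩ := key_color G n hnpos hdeg Finset.univ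
  have : G.Colorable n :=
    ⟨⟨c, fun hab => hc _ (Finset.mem_univ _) _ (Finset.mem_univ _) hab⟩⟩
  exact this.chromaticNumber_le
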